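/- Let X be an inner product module over a C*-algebra A, e ∈ X with ⟨e,e⟩ idempotent, and x, y ∈ X, a, b, c, d ∈ A. If Re⟨x − ea, eb − x⟩ ≥ 0 and Re⟨y − ec, ed − y⟩ ≥ 0 in A, then |⟨x,y⟩ − ⟨x,e⟩⟨e,y⟩| ≤ (1/4)‖e(a−b)‖ · |e(c−d)|. -/

import Mathlib

open scoped NNReal ENNReal

private lemma grs_spectralRadius_mul_comm {A : Type*} [NormedRing A] [NormedAlgebra ℝ A]
    (x y : A) : spectralRadius ℝ (x * y) = spectralRadius ℝ (y * x) := by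
  have key : ∀ u v : A, spectralRadius ℝ (u * v) ≤ spectralRadius ℝ (v * u) := by
    intro u v
    rw [spectralRadius, spectralRadius]
    refine iSup₂_le fun k hk => ?_
    rcases eq_or_ne k 0 with rfl | hk0
    · simp
    · have hmem : k ∈ spectrum ℝ (u * v) \ {0} := ⟨hk, hk0⟩
      rw [spectrum.nonzero_mul_comm] at hmem
      exact le_iSup₂ (f := fun k (_ : k ∈ spectrum ℝ (v * u)) => (‖k‖₊ : ℝ≥0∞)) k hmem.1
  exact le_antisymm (key x y) (key y x)

section CStar

variable {A : Type*} [CStarAlgebra A] [PartialOrder A] [StarOrderedRing A]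

private lemma grs_sqrt_mono_unit [Nontrivial A] {a b : A} (ha : 0 ≤ a) (hb : 0 ≤ b)
    (hbu : IsUnit b) (hab : a ≤ b) : CFC.sqrt a ≤ CFC.sqrt b := by
  have hsb : (0:A) ≤ CFC.sqrt b := CFC.sqrt_nonneg _
  have hsa : (0:A) ≤ CFC.sqrt a := CFC.sqrt_nonneg _
  have hmul : CFC.sqrt b * CFC.sqrt b = b := CFC.sqrt_mul_sqrt_self b hb
  have h0spec : (0:ℝ≥0) ∉ spectrum ℝ≥0 b := by
    have := hbu.unit.zero_notMem_spectrum ℝ≥0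
    rwa [hbu.unit_spec] at this
  have hc0 : Commute (CFC.sqrt b) b := by
    simpa [hmul] using Commute.mul_right (Commute.refl (CFC.sqrt b)) (Commute.refl (CFC.sqrt b))
  have hc1 : Commute (CFC.sqrt b) (↑hbu.unit : A) := by rwa [hbu.unit_spec]
  have hc : Commute (CFC.sqrt b) (↑hbu.unit⁻¹ : A) := hc1.units_inv_right
  have hsbu : IsUnit (CFC.sqrt b) := by
    refine ⟨⟨CFC.sqrt b, CFC.sqrt b * ↑hbu.unit⁻¹, ?_, ?_⟩, rfl⟩
    · show CFC.sqrt b * (CFC.sqrt b * ↑hbu.unit⁻¹) = 1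
      rw [← mul_assoc, hmul, hbu.mul_val_inv]
    · show CFC.sqrt b * ↑hbu.unit⁻¹ * CFC.sqrt b = 1
      rw [mul_assoc, ← hc.eq, ← mul_assoc, hmul, hbu.mul_val_inv]
  rw [le_iff_norm_sqrt_mul_rpow (CFC.sqrt a) (CFC.sqrt b) hsa (hsbu.isStrictlyPositive hsb)]
  set q := CFC.sqrt (CFC.sqrt a) with hq_def
  set w := CFC.sqrt b ^ (-(1/2) : ℝ) with hw_def
  have hq : (0:A) ≤ q := CFC.sqrt_nonneg _
  have hw : (0:A) ≤ w := CFC.rpow_nonneg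
  have hq2 : q * q = CFC.sqrt a := CFC.sqrt_mul_sqrt_self _ (CFC.sqrt_nonneg _)
  have hw2 : w * w = b ^ (-(1/2) : ℝ) := by
    rw [hw_def, CFC.sqrt_eq_rpow (a := b),
      CFC.rpow_rpow b _ _ (by norm_num) (hbu.isStrictlyPositive hb), ← CFC.rpow_add hbu]
    norm_num
  have h1 : ‖CFC.sqrt a * b ^ (-(1/2) : ℝ)‖ ≤ 1 := (le_iff_norm_sqrt_mul_rpow a b ha (hbu.isStrictlyPositive hb)).mp hab
  have hstar : star (q * w) = w * q := by
    rw [star_mul, (IsSelfAdjoint.of_nonneg hq).star_eq, (IsSelfAdjoint.of_nonneg hw).star_eq]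
  have hp_sa : IsSelfAdjoint (w * q * (q * w)) := by
    rw [← hstar]; exact IsSelfAdjoint.star_mul_self (q * w)
  have hnorm_sq : ‖q * w‖ * ‖q * w‖ = ‖w * q * (q * w)‖ := by
    rw [← hstar, CStarRing.norm_star_mul_self]
  have hr : spectralRadius ℝ (w * q * (q * w))
      = spectralRadius ℝ (b ^ (-(1/2):ℝ) * CFC.sqrt a) := by
    rw [grs_spectralRadius_mul_comm (w * q) (q * w)]
    have e1 : q * w * (w * q) = q * (w * w * q) := by
      rw [mul_assoc q w (w * q), ← mul_assoc w w q]
    rw [e1, grs_spectralRadius_mul_comm q (w * w * q)]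
    congr 1
    rw [hw2, mul_assoc, hq2]
  have hble : spectralRadius ℝ (b ^ (-(1/2):ℝ) * CFC.sqrt a)
      ≤ ‖b ^ (-(1/2):ℝ) * CFC.sqrt a‖₊ := spectrum.spectralRadius_le_nnnorm _
  have hnorm_flip : ‖b ^ (-(1/2):ℝ) * CFC.sqrt a‖ = ‖CFC.sqrt a * b ^ (-(1/2):ℝ)‖ := by
    rw [← norm_star, star_mul, (IsSelfAdjoint.of_nonneg (CFC.sqrt_nonneg (a := a))).star_eq,
      (IsSelfAdjoint.of_nonneg (CFC.rpow_nonneg (a := b) (y := (-(1/2):ℝ)))).star_eq]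
  have key : ‖w * q * (q * w)‖ ≤ 1 := by
    rw [← hp_sa.toReal_spectralRadius_eq_norm, hr]
    calc (spectralRadius ℝ (b ^ (-(1/2):ℝ) * CFC.sqrt a)).toReal
        ≤ ((‖b ^ (-(1/2):ℝ) * CFC.sqrt a‖₊ : ℝ≥0∞)).toReal :=
          ENNReal.toReal_mono ENNReal.coe_ne_top hble
      _ = ‖b ^ (-(1/2):ℝ) * CFC.sqrt a‖ := by simp
      _ ≤ 1 := by rw [hnorm_flip]; exact h1
  nlinarith [norm_nonneg (q * w), hnorm_sq]

omit [PartialOrder A] [StarOrderedRing A] in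
private lemma grs_smul_one_unit {r : ℝ} (hr : r ≠ 0) : IsUnit (r • (1:A)) := by
  have : r • (1:A) = algebraMap ℝ A r := by simp [Algebra.algebraMap_eq_smul_one]
  rw [this]
  exact (isUnit_iff_ne_zero.mpr hr).map (algebraMap ℝ A)

private lemma grs_sqrt_mono [Nontrivial A] {a b : A} (ha : 0 ≤ a) (hb : 0 ≤ b) (hab : a ≤ b) :
    CFC.sqrt a ≤ CFC.sqrt b := by
  have key : ∀ ε : ℝ, 0 < ε → (0:A) ≤ CFC.sqrt b + Real.sqrt ε • 1 - CFC.sqrt a := by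
    intro ε hε
    set t : A := CFC.sqrt b + Real.sqrt ε • 1 with ht_def
    have hsb : (0:A) ≤ CFC.sqrt b := CFC.sqrt_nonneg _
    have hsε : (0:ℝ) < Real.sqrt ε := Real.sqrt_pos.mpr hε
    have ht : (0:A) ≤ t := add_nonneg hsb (smul_nonneg hsε.le zero_le_one)
    have htu : IsUnit t := by
      refine CStarAlgebra.isUnit_of_le (Real.sqrt ε • (1:A)) ?_
        ((grs_smul_one_unit hsε.ne').isStrictlyPositive (smul_nonneg hsε.le zero_le_one))
      rw [ht_def]
      exact le_add_of_nonneg_left hsb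
    have htt : (0:A) ≤ t * t := by
      have := star_mul_self_nonneg t
      rwa [(IsSelfAdjoint.of_nonneg ht).star_eq] at this
    have h2 : b + ε • 1 ≤ t * t := by
      have hexp : t * t = b + ε • 1 + (2 * Real.sqrt ε) • CFC.sqrt b := by
        rw [ht_def, add_mul, mul_add, mul_add, CFC.sqrt_mul_sqrt_self b hb]
        simp only [mul_one, one_mul, smul_mul_assoc, mul_smul_comm, smul_smul,
          Real.mul_self_sqrt hε.le]
        module
      rw [hexp]
      exact le_add_of_nonneg_right (smul_nonneg (by positivity) hsb)
    have h1 : a ≤ b + ε • 1 :=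
      hab.trans (le_add_of_nonneg_right (smul_nonneg hε.le zero_le_one))
    have := grs_sqrt_mono_unit ha htt (htu.mul htu) (h1.trans h2)
    rwa [CFC.sqrt_mul_self t ht, ← sub_nonneg] at this
  have hlim : Filter.Tendsto (fun ε : ℝ => CFC.sqrt b + Real.sqrt ε • (1:A) - CFC.sqrt a)
      (nhdsWithin 0 (Set.Ioi 0)) (nhds (CFC.sqrt b - CFC.sqrt a)) := by
    have h0 : Filter.Tendsto (fun ε : ℝ => Real.sqrt ε • (1:A)) (nhdsWithin 0 (Set.Ioi 0))
        (nhds (0:A)) := by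
      have := ((Real.continuous_sqrt.tendsto 0).mono_left
        (nhdsWithin_le_nhds : nhdsWithin (0:ℝ) (Set.Ioi 0) ≤ nhds 0)).smul_const (1:A)
      simpa using this
    simpa using (tendsto_const_nhds.add h0).sub tendsto_const_nhds
  have hmem : (0:A) ≤ CFC.sqrt b - CFC.sqrt a := by
    refine CStarAlgebra.isClosed_nonneg.mem_of_tendsto hlim ?_
    filter_upwards [self_mem_nhdsWithin] with ε hε
    exact key ε hε
  exact sub_nonneg.mp hmem

private lemma grs_sqrt_smul {r : ℝ} (hr : 0 ≤ r) {x : A} (hx : 0 ≤ x) :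
    CFC.sqrt (r • x) = Real.sqrt r • CFC.sqrt x := by
  refine CFC.sqrt_unique ?_ (smul_nonneg (Real.sqrt_nonneg r) (CFC.sqrt_nonneg _))
  rw [smul_mul_assoc, mul_smul_comm, smul_smul, Real.mul_self_sqrt hr,
    CFC.sqrt_mul_sqrt_self x hx]

private lemma grs_half_smul_nonneg {z : A} (h : 0 ≤ (2⁻¹ : ℂ) • z) : 0 ≤ z := by
  have h2 := smul_nonneg (by norm_num : (0:ℝ) ≤ 2) h
  rwa [← Complex.coe_smul, smul_smul, show ((2:ℝ):ℂ) * 2⁻¹ = 1 by norm_num, one_smul] at h2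

end CStar

/-- If `Re⟨x − ea, eb − x⟩ ≥ 0` and `Re⟨y − ec, ed − y⟩ ≥ 0`, then
`|⟨x,y⟩ − ⟨x,e⟩⟨e,y⟩| ≤ (1/4)‖e(a−b)‖ · |e(c−d)|`, where `|t| = (t*t)^{1/2}` in `A`
and `‖z‖ = ‖⟨z,z⟩‖^{1/2}` for `z ∈ X`. -/
theorem stmt6 {A X : Type*} [CStarAlgebra A] [PartialOrder A] [StarOrderedRing A]
    [AddCommGroup X]
    (inner : X → X → A) (smul : X → A → X)
    (h_add : ∀ x y z : X, inner x (y + z) = inner x y + inner x z)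
    (h_smul : ∀ (x y : X) (a : A), inner x (smul y a) = inner x y * a)
    (h_smul_add : ∀ (x : X) (a b : A), smul x (a + b) = smul x a + smul x b)
    (h_star : ∀ x y : X, star (inner x y) = inner y x)
    (h_pos : ∀ x : X, 0 ≤ inner x x)
    (h_nondeg : ∀ x : X, inner x x = 0 → x = 0)
    (e : X) (h_idem : inner e e * inner e e = inner e e)
    (x y : X) (a b c d : A)
    (hx : 0 ≤ (2⁻¹ : ℂ) • (inner (x - smul e a) (smul e b - x) +
      star (inner (x - smul e a) (smul e b - x))))
    (hy : 0 ≤ (2⁻¹ : ℂ) • (inner (y - smul e c) (smul e d - y) +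
      star (inner (y - smul e c) (smul e d - y)))) :
    CFC.sqrt (star (inner x y - inner x e * inner e y) *
        (inner x y - inner x e * inner e y)) ≤
      ((4⁻¹ : ℝ) * Real.sqrt ‖inner (smul e (a - b)) (smul e (a - b))‖) •
        CFC.sqrt (inner (smul e (c - d)) (smul e (c - d))) := by
  rcases subsingleton_or_nontrivial A with hA | hA
  · exact le_of_eq (Subsingleton.elim _ _)
  -- basic module API
  have i_zero_r : ∀ z : X, inner z 0 = 0 := by
    intro z
    have h := h_add z 0 0
    rw [add_zero] at h
    exact (left_eq_add.mp h)
  have i_neg_r : ∀ z w : X, inner z (-w) = - inner z w := by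
    intro z w
    have h := h_add z w (-w)
    rw [add_neg_cancel, i_zero_r] at h
    exact (eq_neg_of_add_eq_zero_right h.symm)
  have i_sub_r : ∀ z w w' : X, inner z (w - w') = inner z w - inner z w' := by
    intro z w w'
    rw [sub_eq_add_neg, h_add, i_neg_r, ← sub_eq_add_neg]
  have i_add_l : ∀ z w w' : X, inner (w + w') z = inner w z + inner w' z := by
    intro z w w'
    rw [← h_star z (w + w'), h_add, star_add, h_star, h_star]
  have i_neg_l : ∀ z w : X, inner (-w) z = - inner w z := by
    intro z w
    rw [← h_star z (-w), i_neg_r, star_neg, h_star]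
  have i_sub_l : ∀ z w w' : X, inner (w - w') z = inner w z - inner w' z := by
    intro z w w'
    rw [sub_eq_add_neg, i_add_l, i_neg_l, ← sub_eq_add_neg]
  have i_smul_l : ∀ (w z : X) (t : A), inner (smul w t) z = star t * inner w z := by
    intro w z t
    rw [← h_star z (smul w t), h_smul, star_mul, h_star]
  have i_zero_l : ∀ z : X, inner 0 z = 0 := by
    intro z
    rw [← h_star z 0, i_zero_r, star_zero]
  have smul_zero' : ∀ z : X, smul z 0 = 0 := by
    intro z
    have h := h_smul_add z 0 0
    rw [add_zero] at h
    exact (left_eq_add.mp h)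
  have smul_neg' : ∀ (z : X) (t : A), smul z (-t) = - smul z t := by
    intro z t
    have h := h_smul_add z t (-t)
    rw [add_neg_cancel, smul_zero'] at h
    exact (eq_neg_of_add_eq_zero_right h.symm)
  have smul_sub' : ∀ (z : X) (t t' : A), smul z (t - t') = smul z t - smul z t' := by
    intro z t t'
    rw [sub_eq_add_neg, h_smul_add, smul_neg', ← sub_eq_add_neg]
  have hP_star : star (inner e e) = inner e e := h_star e e
  -- e = e⟨e,e⟩
  have he : smul e (inner e e) = e := by
    have h0 : inner (smul e (inner e e) - e) (smul e (inner e e) - e) = 0 := by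
      simp only [i_sub_r, i_sub_l, h_smul, i_smul_l, hP_star, h_idem, sub_self]
    exact sub_eq_zero.mp (h_nondeg _ h0)
  have absorb_r : ∀ z : X, inner z e * inner e e = inner z e := by
    intro z
    conv_rhs => rw [← he]
    rw [h_smul]
  -- residual vectors
  obtain ⟨xt, hxt_def⟩ : ∃ xt : X, xt = x - smul e (inner e x) := ⟨_, rfl⟩
  obtain ⟨yt, hyt_def⟩ : ∃ yt : X, yt = y - smul e (inner e y) := ⟨_, rfl⟩
  have horthx : ∀ t : A, inner xt (smul e t) = 0 := by
    intro t
    rw [hxt_def, h_smul, i_sub_l, i_smul_l, h_star,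
      show inner x e - inner x e * inner e e = 0 by rw [absorb_r, sub_self], zero_mul]
  have horthx' : ∀ t : A, inner (smul e t) xt = 0 := by
    intro t
    rw [← h_star xt (smul e t), horthx, star_zero]
  have horthy : ∀ t : A, inner yt (smul e t) = 0 := by
    intro t
    rw [hyt_def, h_smul, i_sub_l, i_smul_l, h_star,
      show inner y e - inner y e * inner e e = 0 by rw [absorb_r, sub_self], zero_mul]
  have horthy' : ∀ t : A, inner (smul e t) yt = 0 := by
    intro t
    rw [← h_star yt (smul e t), horthy, star_zero]
  -- Φ identification
  have hPhi : inner xt yt = inner x y - inner x e * inner e y := by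
    rw [hyt_def, i_sub_r, horthx, sub_zero, hxt_def, i_sub_l, i_smul_l, h_star]
  -- key identity
  have main : ∀ (z zt : X) (a' b' : A), zt = z - smul e (inner e z) →
      (∀ t : A, inner zt (smul e t) = 0) → (∀ t : A, inner (smul e t) zt = 0) →
      (inner zt zt + inner zt zt + inner zt zt + inner zt zt)
        + ((inner (z - smul e a') (smul e b' - z) + star (inner (z - smul e a') (smul e b' - z)))
          + (inner (z - smul e a') (smul e b' - z) + star (inner (z - smul e a') (smul e b' - z)))
          + inner (smul e ((inner e z - a') - (b' - inner e z)))
              (smul e ((inner e z - a') - (b' - inner e z))))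
        = inner (smul e (a' - b')) (smul e (a' - b')) := by
    intro z zt a' b' hzt ho ho'
    obtain ⟨u, hu_def⟩ : ∃ u : X, u = smul e (inner e z - a') := ⟨_, rfl⟩
    obtain ⟨v, hv_def⟩ : ∃ v : X, v = smul e (b' - inner e z) := ⟨_, rfl⟩
    have hov : inner zt v = 0 := by rw [hv_def]; exact ho _
    have hou : inner u zt = 0 := by rw [hu_def]; exact ho' _
    have hdx1 : z - smul e a' = zt + u := by
      rw [hu_def, smul_sub', hzt]; abel
    have hdx2 : smul e b' - z = -zt + v := by
      rw [hv_def, smul_sub', hzt]; abel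
    have hT : inner (z - smul e a') (smul e b' - z) = -(inner zt zt) + inner u v := by
      rw [hdx1, hdx2, i_add_l, h_add, h_add, i_neg_r, i_neg_r, hov, hou]
      abel
    have hstarT : star (inner (z - smul e a') (smul e b' - z))
        = -(inner zt zt) + inner v u := by
      rw [hT, star_add, star_neg, h_star, h_star]
    have hsum : u + v = smul e (b' - a') := by
      rw [hu_def, hv_def, ← h_smul_add]
      congr 1
      abel
    have hdiff : u - v = smul e ((inner e z - a') - (b' - inner e z)) := by
      rw [hu_def, hv_def, ← smul_sub']
    have hQ : inner (smul e (a' - b')) (smul e (a' - b')) = inner (u + v) (u + v) := by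
      rw [hsum, show (a' : A) - b' = -(b' - a') from (neg_sub b' a').symm, smul_neg',
        i_neg_r, i_neg_l, neg_neg]
    have hexp1 : inner (u + v) (u + v) = inner u u + inner u v + inner v u + inner v v := by
      rw [h_add, i_add_l, i_add_l]; abel
    have hexp2 : inner (u - v) (u - v) = inner u u - inner u v - inner v u + inner v v := by
      rw [i_sub_r, i_sub_l, i_sub_l]; abel
    rw [hstarT, hT, hQ, hexp1, ← hdiff, hexp2]
    abel
  -- positivity of the Re terms
  have hTx : (0:A) ≤ inner (x - smul e a) (smul e b - x) +
      star (inner (x - smul e a) (smul e b - x)) := grs_half_smul_nonneg hx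
  have hTy : (0:A) ≤ inner (y - smul e c) (smul e d - y) +
      star (inner (y - smul e c) (smul e d - y)) := grs_half_smul_nonneg hy
  have hmx := main x xt a b hxt_def horthx horthx'
  have hmy := main y yt c d hyt_def horthy horthy'
  have hx4 : inner xt xt + inner xt xt + inner xt xt + inner xt xt
      ≤ inner (smul e (a - b)) (smul e (a - b)) := by
    rw [← hmx]
    exact le_add_of_nonneg_right (add_nonneg (add_nonneg hTx hTx) (h_pos _))
  have hy4 : inner yt yt + inner yt yt + inner yt yt + inner yt yt
      ≤ inner (smul e (c - d)) (smul e (c - d)) := by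
    rw [← hmy]
    exact le_add_of_nonneg_right (add_nonneg (add_nonneg hTy hTy) (h_pos _))
  set Qab : A := inner (smul e (a - b)) (smul e (a - b)) with hQab_def
  set Qcd : A := inner (smul e (c - d)) (smul e (c - d)) with hQcd_def
  have hQcd_pos : (0:A) ≤ Qcd := h_pos _
  have hXnorm : ‖inner xt xt‖ ≤ 4⁻¹ * ‖Qab‖ := by
    have h44 : inner xt xt + inner xt xt + inner xt xt + inner xt xt
        = (4:ℝ) • inner xt xt := by module
    have hpos4 : (0:A) ≤ inner xt xt + inner xt xt + inner xt xt + inner xt xt :=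
      add_nonneg (add_nonneg (add_nonneg (h_pos xt) (h_pos xt)) (h_pos xt)) (h_pos xt)
    have hn := CStarAlgebra.norm_le_norm_of_nonneg_of_le hpos4 hx4
    rw [h44, norm_smul] at hn
    simp only [Real.norm_ofNat] at hn
    linarith
  have hY : inner yt yt ≤ (4⁻¹:ℝ) • Qcd := by
    have h14 : (4⁻¹:ℝ) • (inner yt yt + inner yt yt + inner yt yt + inner yt yt)
        = inner yt yt := by module
    have h' := smul_le_smul_of_nonneg_left hy4 (by norm_num : (0:ℝ) ≤ 4⁻¹)
    rwa [h14] at h'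
  -- Cauchy–Schwarz
  have hCS : star (inner xt yt) * inner xt yt ≤ ‖inner xt xt‖ • inner yt yt := by
    by_cases hz : inner xt xt = 0
    · have hxt0 : xt = 0 := h_nondeg _ hz
      rw [hxt0]
      simp [i_zero_l]
    · obtain ⟨t, ht_def⟩ : ∃ t : ℝ, t = ‖inner xt xt‖ := ⟨_, rfl⟩
      have ht0 : 0 < t := ht_def ▸ norm_pos_iff.mpr hz
      rw [← ht_def]
      obtain ⟨cc, hcc_def⟩ : ∃ cc : A, cc = t⁻¹ • inner xt yt := ⟨_, rfl⟩
      have hpos := h_pos (yt - smul xt cc)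
      simp only [i_sub_r, i_sub_l, h_smul, i_smul_l] at hpos
      have hb1 : inner xt xt ≤ t • (1:A) := by
        rw [ht_def]
        have h' := IsSelfAdjoint.le_algebraMap_norm_self (a := inner xt xt)
          (IsSelfAdjoint.of_nonneg (h_pos xt))
        rwa [Algebra.algebraMap_eq_smul_one] at h'
      have heq1 : ∀ (s w : A) (r : ℝ), s * (r • (1:A)) * w = r • (s * w) := by
        intro s w r
        rw [mul_smul_comm, mul_one, smul_mul_assoc]
      have hconj : star cc * inner xt xt * cc ≤ t • (star cc * cc) :=
        le_of_le_of_eq (star_left_conjugate_le_conjugate hb1 cc) (heq1 _ _ _)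
      have hre : inner yt yt - star cc * inner xt yt
            - (inner yt xt * cc - star cc * inner xt xt * cc)
          = inner yt yt - star cc * inner xt yt - inner yt xt * cc
            + star cc * inner xt xt * cc := by abel
      rw [hre] at hpos
      have h5 : (0:A) ≤ inner yt yt - star cc * inner xt yt - inner yt xt * cc
          + t • (star cc * cc) :=
        hpos.trans (add_le_add_right hconj _)
      have hA2 : star cc * inner xt yt = t⁻¹ • (star (inner xt yt) * inner xt yt) := by
        simp only [hcc_def, star_smul, star_trivial, smul_mul_assoc]
      have hA1 : inner yt xt * cc = t⁻¹ • (star (inner xt yt) * inner xt yt) := by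
        rw [← h_star xt yt, hcc_def, mul_smul_comm]
      have hC : t • (star cc * cc) = t⁻¹ • (star (inner xt yt) * inner xt yt) := by
        simp only [hcc_def, star_smul, star_trivial, smul_mul_assoc, mul_smul_comm, smul_smul]
        congr 1
        field_simp
      rw [hA2, hA1, hC] at h5
      have hre2 : inner yt yt - t⁻¹ • (star (inner xt yt) * inner xt yt)
            - t⁻¹ • (star (inner xt yt) * inner xt yt)
            + t⁻¹ • (star (inner xt yt) * inner xt yt)
          = inner yt yt - t⁻¹ • (star (inner xt yt) * inner xt yt) := by abel
      rw [hre2] at h5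
      have h6 : t⁻¹ • (star (inner xt yt) * inner xt yt) ≤ inner yt yt :=
        sub_nonneg.mp h5
      have h7 := smul_le_smul_of_nonneg_left h6 ht0.le
      rwa [smul_smul, mul_inv_cancel₀ ht0.ne', one_smul] at h7
  have hPsi_pos : (0:A) ≤ star (inner xt yt) * inner xt yt := star_mul_self_nonneg _
  have hchain : star (inner xt yt) * inner xt yt ≤ (16⁻¹ * ‖Qab‖) • Qcd := by
    calc star (inner xt yt) * inner xt yt
        ≤ ‖inner xt xt‖ • inner yt yt := hCS
      _ ≤ ‖inner xt xt‖ • ((4⁻¹:ℝ) • Qcd) := smul_le_smul_of_nonneg_left hY (norm_nonneg _)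
      _ = (‖inner xt xt‖ * 4⁻¹) • Qcd := by rw [smul_smul]
      _ ≤ ((4⁻¹ * ‖Qab‖) * 4⁻¹) • Qcd := smul_le_smul_of_nonneg_right
            (mul_le_mul_of_nonneg_right hXnorm (by norm_num)) hQcd_pos
      _ = (16⁻¹ * ‖Qab‖) • Qcd := by ring_nf
  rw [← hPhi]
  calc CFC.sqrt (star (inner xt yt) * inner xt yt)
      ≤ CFC.sqrt ((16⁻¹ * ‖Qab‖) • Qcd) :=
        grs_sqrt_mono hPsi_pos (smul_nonneg (by positivity) hQcd_pos) hchain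
    _ = Real.sqrt (16⁻¹ * ‖Qab‖) • CFC.sqrt Qcd := grs_sqrt_smul (by positivity) hQcd_pos
    _ = ((4⁻¹ : ℝ) * Real.sqrt ‖Qab‖) • CFC.sqrt Qcd := by
        rw [show (16⁻¹ : ℝ) * ‖Qab‖ = (4⁻¹ * 4⁻¹) * ‖Qab‖ by norm_num,
          Real.sqrt_mul (by norm_num), Real.sqrt_mul_self (by norm_num)]
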